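/- Let V be a variety and σ₁, σ₂ hypersubstitutions of type τ. If σ₁(f_i) ≈ σ₂(f_i) is an identity of V for every operation symbol f_i, then σ̄₁(p) ≈ σ̄₂(p) is an identity of V for every term p; consequently the derived varieties V_{σ₁} and V_{σ₂} coincide. -/

import Mathlib

inductive Term (I : Type) (τ : I → ℕ) : Type
  | var : ℕ → Term I τ
  | app : (i : I) → (Fin (τ i) → Term I τ) → Term I τ

structure Alg (I : Type) (τ : I → ℕ) where
  carrier : Type
  nonempty : Nonempty carrier
  op : (i : I) → (Fin (τ i) → carrier) → carrier

def Alg.eval {I : Type} {τ : I → ℕ} (A : Alg I τ) (env : ℕ → A.carrier) :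
    Term I τ → A.carrier
  | .var n => env n
  | .app i args => A.op i (fun k => A.eval env (args k))

def Term.subst {I : Type} {τ : I → ℕ} (s : ℕ → Term I τ) : Term I τ → Term I τ
  | .var n => s n
  | .app i args => .app i (fun k => (args k).subst s)

def hsub {I : Type} {τ : I → ℕ} (σ : (i : I) → Term I τ) : Term I τ → Term I τ
  | .var n => .var n
  | .app i args =>
      (σ i).subst (fun n => if h : n < τ i then hsub σ (args ⟨n, h⟩) else .var n)

noncomputable def derived {I : Type} {τ : I → ℕ} (A : Alg I τ) (σ : (i : I) → Term I τ) : Alg I τ where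
  carrier := A.carrier
  nonempty := A.nonempty
  op := fun i args =>
    A.eval (fun n => if h : n < τ i then args ⟨n, h⟩ else Classical.choice A.nonempty) (σ i)

def varsLt {I : Type} {τ : I → ℕ} : Term I τ → ℕ → Prop
  | .var m, n => m < n
  | .app _ args, n => ∀ k, varsLt (args k) n

def satisfies {I : Type} {τ : I → ℕ} (A : Alg I τ) (p q : Term I τ) : Prop :=
  ∀ env : ℕ → A.carrier, A.eval env p = A.eval env q

/-- A class of algebras is a variety if it is an equational class. -/
def IsVariety {I : Type} {τ : I → ℕ} (V : Set (Alg I τ)) : Prop :=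
  ∃ E : Set (Term I τ × Term I τ), V = {A | ∀ e ∈ E, satisfies A e.1 e.2}

/-- The derived variety `V_σ`: the variety generated by the derived algebras
`A_σ`, `A ∈ V` (the models of the equational theory of that class). -/
def derivedVariety {I : Type} {τ : I → ℕ} (V : Set (Alg I τ))
    (σ : (i : I) → Term I τ) : Set (Alg I τ) :=
  {B | ∀ p q : Term I τ, (∀ A ∈ V, satisfies (derived A σ) p q) → satisfies B p q}

lemma eval_congr {I : Type} {τ : I → ℕ} (A : Alg I τ) (t : Term I τ) (n : ℕ)
    (ht : varsLt t n) (e₁ e₂ : ℕ → A.carrier) (he : ∀ m < n, e₁ m = e₂ m) :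
    A.eval e₁ t = A.eval e₂ t := by
  induction t with
  | var m => exact he m ht
  | app i args ih =>
    simp only [Alg.eval]
    congr 1
    funext k
    exact ih k (ht k)

lemma eval_subst {I : Type} {τ : I → ℕ} (A : Alg I τ) (s : ℕ → Term I τ)
    (env : ℕ → A.carrier) (t : Term I τ) :
    A.eval env (t.subst s) = A.eval (fun n => A.eval env (s n)) t := by
  induction t with
  | var m => rfl
  | app i args ih =>
    simp only [Term.subst, Alg.eval]
    congr 1
    funext k
    exact ih k

lemma eval_derived {I : Type} {τ : I → ℕ} (A : Alg I τ) (σ : (i : I) → Term I τ)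
    (hσ : ∀ i, varsLt (σ i) (τ i)) (env : ℕ → A.carrier) (p : Term I τ) :
    (derived A σ).eval env p = A.eval env (hsub σ p) := by
  induction p with
  | var m => rfl
  | app i args ih =>
    show A.eval _ (σ i) = A.eval env ((σ i).subst _)
    rw [eval_subst]
    apply eval_congr A (σ i) (τ i) (hσ i)
    intro m hm
    rw [dif_pos hm]
    exact (dif_pos hm).trans (ih ⟨m, hm⟩)

/-- If `σ₁(f_i) ≈ σ₂(f_i)` is an identity of the variety `V` for every
operation symbol `f_i`, then `σ̄₁(p) ≈ σ̄₂(p)` is an identity of `V` for every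
term `p`, and the derived varieties `V_{σ₁}` and `V_{σ₂}` coincide. -/
theorem derived_varieties_eq {I : Type} {τ : I → ℕ} (V : Set (Alg I τ))
    (hV : IsVariety V) (σ₁ σ₂ : (i : I) → Term I τ)
    (hσ₁ : ∀ i, varsLt (σ₁ i) (τ i)) (hσ₂ : ∀ i, varsLt (σ₂ i) (τ i))
    (h : ∀ i, ∀ A ∈ V, satisfies A (σ₁ i) (σ₂ i)) :
    (∀ p : Term I τ, ∀ A ∈ V, satisfies A (hsub σ₁ p) (hsub σ₂ p)) ∧
      derivedVariety V σ₁ = derivedVariety V σ₂ := by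
  have main : ∀ p : Term I τ, ∀ A ∈ V, satisfies A (hsub σ₁ p) (hsub σ₂ p) := by
    intro p
    induction p with
    | var m => intro A _ env; rfl
    | app i args ih =>
      intro A hA env
      show A.eval env ((σ₁ i).subst _) = A.eval env ((σ₂ i).subst _)
      rw [eval_subst, eval_subst]
      have henv : (fun n => A.eval env (if h : n < τ i then hsub σ₁ (args ⟨n, h⟩) else .var n))
          = (fun n => A.eval env (if h : n < τ i then hsub σ₂ (args ⟨n, h⟩) else .var n)) := by
        funext n
        by_cases hn : n < τ i
        · simp only [hn, dif_pos]
          exact ih ⟨n, hn⟩ A hA env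
        · simp [hn]
      rw [henv]
      exact h i A hA _
  refine ⟨main, ?_⟩
  have key : ∀ (p q : Term I τ),
      (∀ A ∈ V, satisfies (derived A σ₁) p q) ↔ (∀ A ∈ V, satisfies (derived A σ₂) p q) := by
    intro p q
    constructor
    · intro H A hA env
      rw [eval_derived A σ₂ hσ₂ env p, eval_derived A σ₂ hσ₂ env q,
        ← main p A hA env, ← main q A hA env,
        ← eval_derived A σ₁ hσ₁ env p, ← eval_derived A σ₁ hσ₁ env q]
      exact H A hA env
    · intro H A hA env
      rw [eval_derived A σ₁ hσ₁ env p, eval_derived A σ₁ hσ₁ env q,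
        main p A hA env, main q A hA env,
        ← eval_derived A σ₂ hσ₂ env p, ← eval_derived A σ₂ hσ₂ env q]
      exact H A hA env
  ext B
  constructor
  · intro hB p q hpq
    exact hB p q ((key p q).mpr hpq)
  · intro hB p q hpq
    exact hB p q ((key p q).mp hpq)
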